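/- Let A, B ∈ H^n with A invertible, and suppose the set {A, B} is ASDC, i.e., there exist sequences Ã_j → A, B̃_j → B of Hermitian matrices with each pair {Ã_j, B̃_j} SDC. Then A⁻¹B has only real eigenvalues. -/

import Mathlib

open Matrix Filter
open scoped Matrix.Norms.L2Operator

/-- If `A` is invertible Hermitian, `B` is Hermitian, and `{A, B}` is ASDC (a limit of
SDC Hermitian pairs), then `A⁻¹ * B` has only real eigenvalues. -/
theorem asdc_pair_imp_real_eigenvalues
    {n : ℕ} (A B : Matrix (Fin n) (Fin n) ℂ)
    (hA : A.IsHermitian) (hB : B.IsHermitian) (hAinv : IsUnit A)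
    (At Bt : ℕ → Matrix (Fin n) (Fin n) ℂ)
    (hAtherm : ∀ j, (At j).IsHermitian) (hBtherm : ∀ j, (Bt j).IsHermitian)
    (hAt : Tendsto At atTop (nhds A)) (hBt : Tendsto Bt atTop (nhds B))
    (hSDC : ∀ j, ∃ P : Matrix (Fin n) (Fin n) ℂ, IsUnit P ∧
      (Pᴴ * At j * P).IsDiag ∧ (Pᴴ * Bt j * P).IsDiag) :
    ∀ μ ∈ spectrum ℂ (A⁻¹ * B), μ.im = 0 := by
  intro μ hμ
  by_contra him
  have hdetA : A.det ≠ 0 := by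
    have := (Matrix.isUnit_iff_isUnit_det A).mp hAinv
    exact this.ne_zero
  -- Step 1: det (μ • A - B) = 0
  have h1 : ¬ IsUnit (algebraMap ℂ (Matrix (Fin n) (Fin n) ℂ) μ - A⁻¹ * B) :=
    spectrum.mem_iff.mp hμ
  have h2 : (μ • (1 : Matrix (Fin n) (Fin n) ℂ) - A⁻¹ * B).det = 0 := by
    rw [Matrix.isUnit_iff_isUnit_det, isUnit_iff_ne_zero, not_ne_iff] at h1
    simpa [Algebra.algebraMap_eq_smul_one] using h1
  have h3 : (μ • A - B).det = 0 := by
    have hfac : A⁻¹ * (μ • A - B) = μ • (1 : Matrix (Fin n) (Fin n) ℂ) - A⁻¹ * B := by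
      rw [Matrix.mul_sub, Matrix.mul_smul, Matrix.nonsing_inv_mul A (isUnit_iff_ne_zero.mpr hdetA)]
    have := congrArg Matrix.det hfac
    rw [Matrix.det_mul, h2] at this
    have hdetAinv : (A⁻¹).det ≠ 0 := by
      rw [Matrix.det_nonsing_inv, Ring.inverse_eq_inv']
      exact inv_ne_zero hdetA
    exact (mul_eq_zero.mp this).resolve_left hdetAinv
  -- Step 2: key inequality for each j
  have key : ∀ j, |μ.im| ^ n * ‖(At j).det‖
      ≤ ‖(μ • At j - Bt j).det‖ := by
    intro j
    obtain ⟨P, hP, hDA, hDB⟩ := hSDC j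
    have hdetP : P.det ≠ 0 := ((Matrix.isUnit_iff_isUnit_det P).mp hP).ne_zero
    set DA := Pᴴ * At j * P with hDAdef
    set DB := Pᴴ * Bt j * P with hDBdef
    have hDAh : DA.IsHermitian := isHermitian_conjTranspose_mul_mul P (hAtherm j)
    have hDBh : DB.IsHermitian := isHermitian_conjTranspose_mul_mul P (hBtherm j)
    have hre : ∀ (M : Matrix (Fin n) (Fin n) ℂ), M.IsHermitian → ∀ i, (M i i).im = 0 := by
      intro M hM i
      have h := congrFun (congrFun hM.eq i) i
      rw [Matrix.conjTranspose_apply] at h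
      have := Complex.conj_eq_iff_im.mp h
      exact this
    -- congruence of M := μ • At j - Bt j
    have hcong : Pᴴ * (μ • At j - Bt j) * P = μ • DA - DB := by
      rw [Matrix.mul_sub, Matrix.sub_mul, Matrix.mul_smul, Matrix.smul_mul, hDAdef, hDBdef]
    have hMdiag : (μ • DA - DB).IsDiag := (hDA.smul μ).sub hDB
    -- determinant of congruence
    have habsP : ∀ X : Matrix (Fin n) (Fin n) ℂ,
        ‖(Pᴴ * X * P).det‖ = ‖P.det‖ ^ 2 * ‖X.det‖ := by
      intro X
      simp only [Matrix.det_mul, Matrix.det_conjTranspose, norm_mul,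
        Complex.star_def, Complex.norm_conj]
      ring
    -- diagonal determinants as products
    have hdetM : ‖(μ • DA - DB).det‖ = ∏ i, ‖(μ * DA i i - DB i i)‖ := by
      rw [← hMdiag.diagonal_diag, Matrix.det_diagonal, norm_prod]
      refine Finset.prod_congr rfl fun i _ => ?_
      simp [Matrix.diag, Matrix.sub_apply, Matrix.smul_apply, smul_eq_mul]
    have hdetDA : ‖DA.det‖ = ∏ i, ‖(DA i i)‖ := by
      rw [← hDA.diagonal_diag, Matrix.det_diagonal, norm_prod]
      simp [Matrix.diag]
    -- per-factor inequality
    have hfac : ∀ i, |μ.im| * ‖(DA i i)‖ ≤ ‖(μ * DA i i - DB i i)‖ := by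
      intro i
      have him1 : (μ * DA i i - DB i i).im = μ.im * (DA i i).re := by
        simp [Complex.sub_im, Complex.mul_im, hre _ hDAh i, hre _ hDBh i]
      have habsDA : ‖(DA i i)‖ = |(DA i i).re| := by
        have : DA i i = ((DA i i).re : ℂ) := by
          apply Complex.ext <;> simp [hre _ hDAh i]
        rw [this, Complex.norm_real]
        simp
      calc |μ.im| * ‖(DA i i)‖ = |(μ * DA i i - DB i i).im| := by
            rw [him1, abs_mul, habsDA]
        _ ≤ ‖(μ * DA i i - DB i i)‖ := Complex.abs_im_le_norm _
    -- put it together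
    have hprod : |μ.im| ^ n * ‖DA.det‖ ≤ ‖(μ • DA - DB).det‖ := by
      have hn' : |μ.im| ^ n = ∏ _i : Fin n, |μ.im| := by
        simp [Finset.prod_const]
      rw [hdetM, hdetDA, hn', ← Finset.prod_mul_distrib]
      refine Finset.prod_le_prod (fun i _ => ?_) (fun i _ => hfac i)
      positivity
    have hP2 : (0:ℝ) < ‖P.det‖ ^ 2 := by
      have h0 : ‖P.det‖ ≠ 0 := by simpa using hdetP
      positivity
    have hfinal : (|μ.im| ^ n * ‖(At j).det‖) * ‖P.det‖ ^ 2
        ≤ ‖(μ • At j - Bt j).det‖ * ‖P.det‖ ^ 2 := by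
      calc (|μ.im| ^ n * ‖(At j).det‖) * ‖P.det‖ ^ 2
          = |μ.im| ^ n * ‖DA.det‖ := by rw [hDAdef, habsP]; ring
        _ ≤ ‖(μ • DA - DB).det‖ := hprod
        _ = ‖(Pᴴ * (μ • At j - Bt j) * P).det‖ := by rw [hcong]
        _ = ‖(μ • At j - Bt j).det‖ * ‖P.det‖ ^ 2 := by
            rw [habsP]; ring
    exact le_of_mul_le_mul_right hfinal hP2
  -- Step 3: pass to the limit
  have hcontdet : Continuous fun M : Matrix (Fin n) (Fin n) ℂ => ‖M.det‖ :=
    continuous_norm.comp continuous_id.matrix_det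
  have lim1 : Tendsto (fun j => |μ.im| ^ n * ‖(At j).det‖) atTop
      (nhds (|μ.im| ^ n * ‖A.det‖)) :=
    ((hcontdet.tendsto A).comp hAt).const_mul _
  have limM : Tendsto (fun j => μ • At j - Bt j) atTop (nhds (μ • A - B)) :=
    (hAt.const_smul μ).sub hBt
  have lim2 : Tendsto (fun j => ‖(μ • At j - Bt j).det‖) atTop
      (nhds (‖(μ • A - B).det‖)) :=
    (hcontdet.tendsto _).comp limM
  have hle : |μ.im| ^ n * ‖A.det‖ ≤ ‖(μ • A - B).det‖ :=
    le_of_tendsto_of_tendsto' lim1 lim2 key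
  rw [h3, norm_zero] at hle
  have habsA : (0:ℝ) < ‖A.det‖ := by
    simpa [norm_pos_iff] using hdetA
  have hpow : |μ.im| ^ n ≤ 0 := by nlinarith [pow_nonneg (abs_nonneg μ.im) n]
  rcases Nat.eq_zero_or_pos n with hn | hn
  · rw [hn, pow_zero] at hpow; linarith
  · have : |μ.im| = 0 := by
      have := le_antisymm hpow (pow_nonneg (abs_nonneg μ.im) n)
      exact pow_eq_zero_iff hn.ne'  |>.mp this
    exact him (abs_eq_zero.mp this)
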